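/- Let ℓ ≥ 2 and let H = (V, E) be an ℓ-uniform hypergraph with |V| ≥ ℓ. Then the number of vertices of H whose degree is strictly greater than (ℓ−1)·|E|/|V| is at least |E|/binom(|V|−1, ℓ−1). -/

import Mathlib

open Finset
open scoped Classical

/-- An `ℓ`-uniform hypergraph on vertex set `Fin n`: a finite set of edges, each an
`ℓ`-element subset of the vertices. -/
structure FinUniformHypergraph (n ℓ : ℕ) where
  edges : Finset (Finset (Fin n))
  uniform : ∀ e ∈ edges, e.card = ℓ

/-- The degree of a vertex `v`: the number of edges containing `v`. -/
def FinUniformHypergraph.degree {n ℓ : ℕ} (H : FinUniformHypergraph n ℓ) (v : Fin n) : ℕ :=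
  (H.edges.filter (fun e => v ∈ e)).card

lemma degree_le_choose (ℓ n : ℕ) (H : FinUniformHypergraph n ℓ) (v : Fin n) :
    H.degree v ≤ (n - 1).choose (ℓ - 1) := by
  have : H.degree v ≤ (Finset.powersetCard (ℓ-1) ((univ : Finset (Fin n)).erase v)).card := by
    apply Finset.card_le_card_of_injOn (fun e => e.erase v)
    · intro e he
      simp only [coe_filter, Set.mem_setOf_eq, mem_coe, mem_filter] at he
      simp only [mem_coe, mem_powersetCard]
      refine ⟨fun x hx => ?_, ?_⟩
      · simp [Finset.mem_erase] at hx ⊢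
        exact hx.1
      · rw [Finset.card_erase_of_mem he.2, H.uniform e he.1]
    · intro e1 h1 e2 h2 h
      simp only [coe_filter, Set.mem_setOf_eq] at h1 h2
      have := congrArg (insert v) h
      rwa [Finset.insert_erase h1.2, Finset.insert_erase h2.2] at this
  rwa [Finset.card_powersetCard, Finset.card_erase_of_mem (mem_univ v), Finset.card_univ,
    Fintype.card_fin] at this

lemma sum_degree (ℓ n : ℕ) (H : FinUniformHypergraph n ℓ) :
    ∑ v, H.degree v = ℓ * H.edges.card := by
  unfold FinUniformHypergraph.degree
  simp_rw [Finset.card_filter]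
  rw [Finset.sum_comm]
  calc ∑ e ∈ H.edges, ∑ v : Fin n, (if v ∈ e then 1 else 0)
      = ∑ e ∈ H.edges, ℓ := by
        refine Finset.sum_congr rfl fun e he => ?_
        rw [Finset.sum_ite_mem, Finset.univ_inter, Finset.sum_const, smul_eq_mul, mul_one,
          H.uniform e he]
    _ = ℓ * H.edges.card := by rw [Finset.sum_const, smul_eq_mul, mul_comm]

/-- **Many vertices of nearly average degree.** In an `ℓ`-uniform hypergraph `H = (V, E)`
with `ℓ ≥ 2` and `|V| ≥ ℓ`, at least `|E| / binom(|V|−1, ℓ−1)` vertices have degree strictly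
greater than `(ℓ−1)·|E|/|V|`. -/
theorem many_high_degree_vertices (ℓ n : ℕ) (hℓ : 2 ≤ ℓ) (hn : ℓ ≤ n)
    (H : FinUniformHypergraph n ℓ) :
    (H.edges.card : ℝ) / ((n - 1).choose (ℓ - 1) : ℝ) ≤
      (((Finset.univ : Finset (Fin n)).filter
          (fun v => ((ℓ : ℝ) - 1) * (H.edges.card : ℝ) / (n : ℝ) < (H.degree v : ℝ))).card
        : ℝ) := by
  have hn0 : 0 < n := lt_of_lt_of_le (by omega) hn
  have hd0 : 0 < (n - 1).choose (ℓ - 1) := Nat.choose_pos (by omega)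
  set p : Fin n → Prop :=
    fun v => ((ℓ : ℝ) - 1) * (H.edges.card : ℝ) / (n : ℝ) < (H.degree v : ℝ) with hp
  set S := (univ : Finset (Fin n)).filter p with hS
  have hsum : ∑ v, (H.degree v : ℝ) = (ℓ : ℝ) * (H.edges.card : ℝ) := by
    rw [← Nat.cast_sum]
    rw [sum_degree ℓ n H]; push_cast; ring
  have hsplit : ∑ v ∈ S, (H.degree v : ℝ) +
      ∑ v ∈ (univ : Finset (Fin n)).filter (fun v => ¬ p v), (H.degree v : ℝ) =
      (ℓ : ℝ) * (H.edges.card : ℝ) := by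
    rw [Finset.sum_filter_add_sum_filter_not, hsum]
  have h1 : ∑ v ∈ S, (H.degree v : ℝ) ≤ (S.card : ℝ) * ((n - 1).choose (ℓ - 1) : ℝ) := by
    calc ∑ v ∈ S, (H.degree v : ℝ) ≤ ∑ _v ∈ S, ((n - 1).choose (ℓ - 1) : ℝ) := by
          refine Finset.sum_le_sum fun v _ => ?_
          exact_mod_cast degree_le_choose ℓ n H v
      _ = (S.card : ℝ) * ((n - 1).choose (ℓ - 1) : ℝ) := by
          rw [Finset.sum_const, nsmul_eq_mul]
  have havg_nonneg : 0 ≤ ((ℓ : ℝ) - 1) * (H.edges.card : ℝ) / (n : ℝ) := by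
    have h1ℓ : (1:ℝ) ≤ (ℓ:ℝ) := by exact_mod_cast le_trans (by omega) hℓ
    apply div_nonneg (mul_nonneg (by linarith) (Nat.cast_nonneg _)) (Nat.cast_nonneg _)
  have h2 : ∑ v ∈ (univ : Finset (Fin n)).filter (fun v => ¬ p v), (H.degree v : ℝ) ≤
      ((ℓ : ℝ) - 1) * (H.edges.card : ℝ) := by
    calc ∑ v ∈ (univ : Finset (Fin n)).filter (fun v => ¬ p v), (H.degree v : ℝ)
        ≤ ∑ _v ∈ (univ : Finset (Fin n)).filter (fun v => ¬ p v),
            ((ℓ : ℝ) - 1) * (H.edges.card : ℝ) / (n : ℝ) := by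
          refine Finset.sum_le_sum fun v hv => ?_
          have := (Finset.mem_filter.mp hv).2
          exact le_of_not_gt this
      _ = (((univ : Finset (Fin n)).filter (fun v => ¬ p v)).card : ℝ) *
            (((ℓ : ℝ) - 1) * (H.edges.card : ℝ) / (n : ℝ)) := by
          rw [Finset.sum_const, nsmul_eq_mul]
      _ ≤ (n : ℝ) * (((ℓ : ℝ) - 1) * (H.edges.card : ℝ) / (n : ℝ)) := by
          refine mul_le_mul_of_nonneg_right ?_ havg_nonneg
          exact_mod_cast (Finset.card_filter_le _ _).trans (by simp)
      _ = ((ℓ : ℝ) - 1) * (H.edges.card : ℝ) := by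
          field_simp
  have key : (H.edges.card : ℝ) ≤ (S.card : ℝ) * ((n - 1).choose (ℓ - 1) : ℝ) := by
    nlinarith [hsplit, h1, h2]
  rw [div_le_iff₀ (by exact_mod_cast hd0)]
  exact key
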